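/- Let B₁ and B₂ be finite skew left braces, α a group homomorphism from (B₂,∘) to Aut(B₁,+,∘), and B := B₁ ⋊_α B₂ the semidirect product. If B is semiprime, then B₁ is semiprime. -/

import Mathlib

/-- A *skew left brace* is a set with two group structures `(B,+)` and `(B,∘)`
(the latter written multiplicatively) satisfying `a∘(b+c) = a∘b - a + a∘c`.
The two identity elements automatically coincide. -/
class SkewLeftBrace (B : Type*) extends AddGroup B, Group B where
  mul_add_eq : ∀ a b c : B, a * (b + c) = a * b - a + a * c

namespace SkewLeftBrace

variable {B : Type*} [SkewLeftBrace B]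

/-- The map `λ_a : b ↦ -a + a∘b`. -/
def lmap (a b : B) : B := -a + a * b

/-- The brace star operation `a*b := -a + a∘b - b`. -/
def bstar (a b : B) : B := -a + a * b - b

/-- `X*Y`: the additive subgroup generated by all `bstar x y`, `x ∈ X`, `y ∈ Y`,
regarded as a set. -/
def setStar (X Y : Set B) : Set B :=
  ↑(AddSubgroup.closure {z : B | ∃ x ∈ X, ∃ y ∈ Y, z = bstar x y})

/-- Pointwise sum of two subsets. -/
def setSum (X Y : Set B) : Set B := {w : B | ∃ x ∈ X, ∃ y ∈ Y, w = x + y}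

/-- `X^Z := {z + x - z : x ∈ X, z ∈ Z}`. -/
def setConj (X Z : Set B) : Set B := {w : B | ∃ x ∈ X, ∃ z ∈ Z, w = z + x + -z}

/-- An ideal of a skew left brace: a subgroup of `(B,+)` which is normal in both
`(B,+)` and `(B,∘)` and invariant under all the maps `λ_a`. -/
structure IsIdeal (I : Set B) : Prop where
  zero_mem : (0 : B) ∈ I
  add_mem : ∀ ⦃x y : B⦄, x ∈ I → y ∈ I → x + y ∈ I
  neg_mem : ∀ ⦃x : B⦄, x ∈ I → -x ∈ I
  add_conj_mem : ∀ (b : B) ⦃x : B⦄, x ∈ I → b + x + -b ∈ I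
  mul_mem : ∀ ⦃x y : B⦄, x ∈ I → y ∈ I → x * y ∈ I
  inv_mem : ∀ ⦃x : B⦄, x ∈ I → x⁻¹ ∈ I
  mul_conj_mem : ∀ (b : B) ⦃x : B⦄, x ∈ I → b * x * b⁻¹ ∈ I
  lmap_mem : ∀ (a : B) ⦃x : B⦄, x ∈ I → lmap a x ∈ I

/-- A minimal ideal: a nonzero ideal whose only sub-ideals are `{0}` and itself. -/
def IsMinimalIdeal (I : Set B) : Prop :=
  IsIdeal I ∧ I ≠ {0} ∧ ∀ J : Set B, IsIdeal J → J ⊆ I → J = {0} ∨ J = I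

theorem mul_zero' (a : B) : a * (0 : B) = a := by
  have h := SkewLeftBrace.mul_add_eq a (0 : B) (0 : B)
  rw [add_zero] at h
  have h2 : a * (0:B) - a = 0 := (right_eq_add.mp h)
  exact sub_eq_zero.mp h2

theorem zero_eq_one : (0 : B) = 1 := by
  have h := mul_zero' (1 : B)
  rw [one_mul] at h
  exact h

theorem IsIdeal.one_mem {I : Set B} (h : IsIdeal I) : (1 : B) ∈ I :=
  (zero_eq_one (B := B)) ▸ h.zero_mem

variable (B) in
/-- A skew left brace is *semiprime* if `I*I ≠ {0}` for every nonzero ideal `I`. -/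
def Semiprime : Prop := ∀ I : Set B, IsIdeal I → I ≠ {0} → setStar I I ≠ {0}

variable (B) in
/-- A skew left brace is *prime*... (and) *simple* if its only ideals are `{0}` and `B`,
and these are distinct. -/
def Simple : Prop :=
  ({0} : Set B) ≠ Set.univ ∧ ∀ I : Set B, IsIdeal I → I = {0} ∨ I = Set.univ

variable (B) in
/-- A skew left brace is *Artinian* if every descending chain of ideals stabilizes. -/
def Artinian : Prop :=
  ∀ f : ℕ → Set B, (∀ n, IsIdeal (f n)) → (∀ n, f (n + 1) ⊆ f n) →
    ∃ N, ∀ n, N ≤ n → f n = f N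

/-- The `*`-products of copies of a fixed set `I`. -/
inductive IsStarPowerOf (I : Set B) : Set B → Prop
  | base : IsStarPowerOf I I
  | star {X Y : Set B} : IsStarPowerOf I X → IsStarPowerOf I Y →
      IsStarPowerOf I (setStar X Y)

variable (B) in
/-- A skew left brace is *strongly semiprime* if for every nonzero ideal `I`, every
`*`-product of copies of `I` is nonzero. -/
def StronglySemiprime : Prop :=
  ∀ I : Set B, IsIdeal I → I ≠ {0} → ∀ X : Set B, IsStarPowerOf I X → X ≠ {0}

/-- The `*`-products of nonzero ideals. -/
inductive IsStarProdOfNonzeroIdeals : Set B → Prop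
  | ideal {I : Set B} : IsIdeal I → I ≠ {0} → IsStarProdOfNonzeroIdeals I
  | star {X Y : Set B} : IsStarProdOfNonzeroIdeals X → IsStarProdOfNonzeroIdeals Y →
      IsStarProdOfNonzeroIdeals (setStar X Y)

variable (B) in
/-- A skew left brace is *strongly prime* if every `*`-product of nonzero ideals is nonzero. -/
def StronglyPrime : Prop :=
  ∀ X : Set B, IsStarProdOfNonzeroIdeals X → X ≠ {0}

end SkewLeftBrace
namespace SkewLeftBrace

variable {B : Type*} [SkewLeftBrace B]

/-- An ideal, regarded as a skew left brace with the restricted operations. -/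
def IsIdeal.brace {I : Set B} (h : IsIdeal I) : SkewLeftBrace I :=
  letI : Zero I := ⟨⟨0, h.zero_mem⟩⟩
  letI : Add I := ⟨fun x y => ⟨x.1 + y.1, h.add_mem x.2 y.2⟩⟩
  letI : Neg I := ⟨fun x => ⟨-x.1, h.neg_mem x.2⟩⟩
  letI : One I := ⟨⟨1, h.one_mem⟩⟩
  letI : Mul I := ⟨fun x y => ⟨x.1 * y.1, h.mul_mem x.2 y.2⟩⟩
  letI : Inv I := ⟨fun x => ⟨x.1⁻¹, h.inv_mem x.2⟩⟩
  { add := (· + ·)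
    zero := 0
    neg := (- ·)
    nsmul := nsmulRec
    zsmul := zsmulRec
    add_assoc := fun a b c => Subtype.ext (add_assoc a.1 b.1 c.1)
    zero_add := fun a => Subtype.ext (zero_add a.1)
    add_zero := fun a => Subtype.ext (add_zero a.1)
    neg_add_cancel := fun a => Subtype.ext (neg_add_cancel a.1)
    mul := (· * ·)
    one := 1
    inv := (·⁻¹)
    npow := npowRec
    zpow := zpowRec
    mul_assoc := fun a b c => Subtype.ext (mul_assoc a.1 b.1 c.1)
    one_mul := fun a => Subtype.ext (one_mul a.1)
    mul_one := fun a => Subtype.ext (mul_one a.1)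
    inv_mul_cancel := fun a => Subtype.ext (inv_mul_cancel a.1)
    mul_add_eq := fun a b c =>
      Subtype.ext (by
        show a.1 * (b.1 + c.1) = a.1 * b.1 + -a.1 + a.1 * c.1
        rw [SkewLeftBrace.mul_add_eq, sub_eq_add_neg]) }

/-- The direct product of two skew left braces, with componentwise operations. -/
def prodBrace (B₁ B₂ : Type*) [SkewLeftBrace B₁] [SkewLeftBrace B₂] :
    SkewLeftBrace (B₁ × B₂) :=
  { (inferInstance : AddGroup (B₁ × B₂)), (inferInstance : Group (B₁ × B₂)) with
    mul_add_eq := fun a b c =>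
      Prod.ext (by simp [SkewLeftBrace.mul_add_eq]) (by simp [SkewLeftBrace.mul_add_eq]) }

/-- Two skew left braces are isomorphic if there is a bijection preserving `+` and `∘`. -/
def IsBraceIsomorphic (A C : Type*) [SkewLeftBrace A] [SkewLeftBrace C] : Prop :=
  ∃ f : A ≃ C, (∀ x y : A, f (x + y) = f x + f y) ∧ (∀ x y : A, f (x * y) = f x * f y)

/-- A group homomorphism from `(B₂,∘)` to the automorphism group `Aut(B₁,+,∘)` of the
skew left brace `B₁`, presented as an action `act : B₂ → B₁ → B₁` by skew left brace
automorphisms. -/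
structure BraceActionHom (B₂ B₁ : Type*) [SkewLeftBrace B₂] [SkewLeftBrace B₁] where
  act : B₂ → B₁ → B₁
  act_bijective : ∀ a : B₂, Function.Bijective (act a)
  act_add : ∀ (a : B₂) (x y : B₁), act a (x + y) = act a x + act a y
  act_mul : ∀ (a : B₂) (x y : B₁), act a (x * y) = act a x * act a y
  act_hom : ∀ (a b : B₂) (x : B₁), act (a * b) x = act a (act b x)
  act_one : ∀ x : B₁, act (1 : B₂) x = x

variable {B₁ B₂ : Type*} [SkewLeftBrace B₁] [SkewLeftBrace B₂]

theorem BraceActionHom.act_one' (α : BraceActionHom B₂ B₁) (a : B₂) :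
    α.act a (1 : B₁) = 1 := by
  have h := α.act_mul a 1 1
  rw [mul_one] at h
  exact mul_eq_left.mp h.symm

/-- The underlying type of the semidirect product of two skew left braces. -/
@[ext]
structure SDP (B₁ B₂ : Type*) where
  fst : B₁
  snd : B₂

/-- The semidirect product `B₁ ⋊_α B₂` of skew left braces: the additive group is the
direct product, while `(a₁,a₂) ∘ (b₁,b₂) = (a₁ ∘ α_{a₂}(b₁), a₂ ∘ b₂)`. -/
def BraceActionHom.sdp (α : BraceActionHom B₂ B₁) : SkewLeftBrace (SDP B₁ B₂) :=
  letI : Zero (SDP B₁ B₂) := ⟨⟨0, 0⟩⟩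
  letI : Add (SDP B₁ B₂) := ⟨fun p q => ⟨p.fst + q.fst, p.snd + q.snd⟩⟩
  letI : Neg (SDP B₁ B₂) := ⟨fun p => ⟨-p.fst, -p.snd⟩⟩
  letI : One (SDP B₁ B₂) := ⟨⟨1, 1⟩⟩
  letI : Mul (SDP B₁ B₂) := ⟨fun p q => ⟨p.fst * α.act p.snd q.fst, p.snd * q.snd⟩⟩
  letI : Inv (SDP B₁ B₂) := ⟨fun p => ⟨α.act p.snd⁻¹ p.fst⁻¹, p.snd⁻¹⟩⟩
  { add := (· + ·)
    zero := 0
    neg := (- ·)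
    nsmul := nsmulRec
    zsmul := zsmulRec
    add_assoc := fun a b c =>
      SDP.ext (add_assoc a.fst b.fst c.fst) (add_assoc a.snd b.snd c.snd)
    zero_add := fun a => SDP.ext (zero_add a.fst) (zero_add a.snd)
    add_zero := fun a => SDP.ext (add_zero a.fst) (add_zero a.snd)
    neg_add_cancel := fun a => SDP.ext (neg_add_cancel a.fst) (neg_add_cancel a.snd)
    mul := (· * ·)
    one := 1
    inv := (·⁻¹)
    npow := npowRec
    zpow := zpowRec
    mul_assoc := fun a b c =>
      SDP.ext
        (by show (a.fst * α.act a.snd b.fst) * α.act (a.snd * b.snd) c.fst =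
              a.fst * α.act a.snd (b.fst * α.act b.snd c.fst)
            rw [α.act_hom, α.act_mul, mul_assoc])
        (mul_assoc a.snd b.snd c.snd)
    one_mul := fun a =>
      SDP.ext (by show (1 : B₁) * α.act 1 a.fst = a.fst; rw [α.act_one, one_mul])
        (one_mul a.snd)
    mul_one := fun a =>
      SDP.ext (by show a.fst * α.act a.snd (1 : B₁) = a.fst; rw [α.act_one', mul_one])
        (mul_one a.snd)
    inv_mul_cancel := fun a =>
      SDP.ext
        (by show α.act a.snd⁻¹ a.fst⁻¹ * α.act a.snd⁻¹ a.fst = 1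
            rw [← α.act_mul, inv_mul_cancel, α.act_one'])
        (inv_mul_cancel a.snd)
    mul_add_eq := fun a b c =>
      SDP.ext
        (by show a.fst * α.act a.snd (b.fst + c.fst) =
              a.fst * α.act a.snd b.fst + -a.fst + a.fst * α.act a.snd c.fst
            rw [α.act_add, SkewLeftBrace.mul_add_eq, sub_eq_add_neg])
        (by show a.snd * (b.snd + c.snd) = a.snd * b.snd + -a.snd + a.snd * c.snd
            rw [SkewLeftBrace.mul_add_eq, sub_eq_add_neg]) }

end SkewLeftBrace

open SkewLeftBrace


namespace SkewLeftBrace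

section General

variable {B : Type*} [SkewLeftBrace B]

theorem zero_mul'' (c : B) : (0 : B) * c = c := by
  rw [zero_eq_one, one_mul]

theorem mul_eq_add_lmap (a b : B) : a * b = a + lmap a b := by
  rw [lmap, add_neg_cancel_left]

theorem lmap_add' (a x y : B) : lmap a (x + y) = lmap a x + lmap a y := by
  simp [lmap, mul_add_eq, sub_eq_add_neg, add_assoc]

theorem lmap_zero' (a : B) : lmap a (0 : B) = 0 := by
  rw [lmap, mul_zero', neg_add_cancel]

theorem lmap_neg' (a x : B) : lmap a (-x) = -(lmap a x) := by
  have h := lmap_add' a x (-x)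
  rw [add_neg_cancel, lmap_zero'] at h
  exact (neg_eq_of_add_eq_zero_right h.symm).symm

theorem mul_neg'' (a b : B) : a * (-b) = a - a * b + a := by
  have h := mul_add_eq a b (-b)
  rw [add_neg_cancel, mul_zero'] at h
  have h2 : a * (-b) = -(a * b - a) + a := eq_neg_add_iff_add_eq.mpr h.symm
  rwa [neg_sub] at h2

theorem lmap_comp' (a b c : B) : lmap (a * b) c = lmap a (lmap b c) := by
  simp [lmap, mul_add_eq, mul_neg'', sub_eq_add_neg, add_assoc, mul_assoc]

theorem lmap_one' (c : B) : lmap (1 : B) c = c := by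
  rw [lmap, one_mul, ← zero_eq_one, neg_zero, zero_add]

theorem lmap_inv_lmap (a c : B) : lmap a⁻¹ (lmap a c) = c := by
  rw [← lmap_comp', inv_mul_cancel, lmap_one']

theorem lmap_lmap_inv (a c : B) : lmap a (lmap a⁻¹ c) = c := by
  rw [← lmap_comp', mul_inv_cancel, lmap_one']

theorem bstar_eq (a b : B) : bstar a b = lmap a b - b := rfl

theorem bstar_zero_right' (a : B) : bstar a (0 : B) = 0 := by
  rw [bstar_eq, lmap_zero', sub_zero]

theorem lmap_zero_left (c : B) : lmap (0 : B) c = c := by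
  rw [lmap, zero_mul'', neg_zero, zero_add]

theorem bstar_zero_left' (c : B) : bstar (0 : B) c = 0 := by
  rw [bstar_eq, lmap_zero_left, sub_self]

theorem neg_eq_lmap_inv (x : B) : -x = lmap x x⁻¹ := by
  rw [lmap, mul_inv_cancel, ← zero_eq_one, add_zero]

theorem inv_eq_lmap_neg (x : B) : x⁻¹ = lmap x⁻¹ (-x) := by
  rw [lmap, mul_neg'', inv_mul_cancel, ← zero_eq_one, sub_zero, neg_add_cancel_left]

theorem bstar_add_right' (a x y : B) :
    bstar a (x + y) = bstar a x + x + bstar a y - x := by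
  simp [bstar_eq, lmap_add', sub_eq_add_neg, add_assoc]

theorem bstar_add_left' (x y c : B) :
    bstar (x + y) c = lmap x (bstar (lmap x⁻¹ y) c) + bstar x c := by
  have hxy : x + y = x * lmap x⁻¹ y := by rw [mul_eq_add_lmap, lmap_lmap_inv]
  simp [bstar_eq, hxy, lmap_comp', sub_eq_add_neg, lmap_add', lmap_neg', add_assoc]

theorem conj_mul_eq (b x : B) :
    b * x * b⁻¹ = b + (lmap b x + lmap b (bstar x b⁻¹)) + -b := by
  have h1 : lmap x b⁻¹ = bstar x b⁻¹ + b⁻¹ := by simp [bstar_eq]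
  rw [mul_eq_add_lmap (b * x) b⁻¹, lmap_comp', h1, lmap_add', mul_eq_add_lmap b x,
    ← neg_eq_lmap_inv]
  simp [add_assoc]

theorem IsIdeal.bstar_mem_right {I : Set B} (h : IsIdeal I) (x : B) {y : B}
    (hy : y ∈ I) : bstar x y ∈ I := by
  rw [bstar_eq, sub_eq_add_neg]
  exact h.add_mem (h.lmap_mem x hy) (h.neg_mem hy)

theorem IsIdeal.bstar_mem_left {I : Set B} (h : IsIdeal I) {x : B} (hx : x ∈ I)
    (c : B) : bstar x c ∈ I := by
  have hz : c⁻¹ * x * c⁻¹⁻¹ ∈ I := h.mul_conj_mem c⁻¹ hx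
  rw [inv_inv] at hz
  have key : bstar x c = -x + (c + lmap c (c⁻¹ * x * c) + -c) := by
    have h2 : c * (c⁻¹ * x * c) = x * c := by group
    have h3 : c + lmap c (c⁻¹ * x * c) = x * c := by rw [← mul_eq_add_lmap, h2]
    show -x + x * c - c = -x + (c + lmap c (c⁻¹ * x * c) + -c)
    rw [h3]
    simp [sub_eq_add_neg, add_assoc]
  rw [key]
  exact h.add_mem (h.neg_mem hx) (h.add_conj_mem c (h.lmap_mem c hz))

theorem IsIdeal.inter {I J : Set B} (hI : IsIdeal I) (hJ : IsIdeal J) :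
    IsIdeal (I ∩ J) where
  zero_mem := ⟨hI.zero_mem, hJ.zero_mem⟩
  add_mem := fun _ _ hx hy => ⟨hI.add_mem hx.1 hy.1, hJ.add_mem hx.2 hy.2⟩
  neg_mem := fun _ hx => ⟨hI.neg_mem hx.1, hJ.neg_mem hx.2⟩
  add_conj_mem := fun b _ hx => ⟨hI.add_conj_mem b hx.1, hJ.add_conj_mem b hx.2⟩
  mul_mem := fun _ _ hx hy => ⟨hI.mul_mem hx.1 hy.1, hJ.mul_mem hx.2 hy.2⟩
  inv_mem := fun _ hx => ⟨hI.inv_mem hx.1, hJ.inv_mem hx.2⟩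
  mul_conj_mem := fun b _ hx => ⟨hI.mul_conj_mem b hx.1, hJ.mul_conj_mem b hx.2⟩
  lmap_mem := fun a _ hx => ⟨hI.lmap_mem a hx.1, hJ.lmap_mem a hx.2⟩

end General

section Span

variable {B : Type*} [SkewLeftBrace B] (G : Set B)

/-- The set of sums of lists of elements of `G`. -/
def lspan : Set B := {x : B | ∃ l : List B, (∀ g ∈ l, g ∈ G) ∧ x = l.sum}

variable {G}

theorem lspan_zero : (0 : B) ∈ lspan G := ⟨[], by simp, by simp⟩

theorem subset_lspan : G ⊆ lspan G := fun g hg => ⟨[g], by simpa, by simp⟩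

theorem lspan_add {x y : B} (hx : x ∈ lspan G) (hy : y ∈ lspan G) :
    x + y ∈ lspan G := by
  obtain ⟨l1, hl1, rfl⟩ := hx
  obtain ⟨l2, hl2, rfl⟩ := hy
  exact ⟨l1 ++ l2, by simp only [List.mem_append]; tauto, by simp⟩

theorem lspan_map {f : B → B} (hf : ∀ u v : B, f (u + v) = f u + f v)
    (hfG : ∀ g ∈ G, f g ∈ G) {x : B} (hx : x ∈ lspan G) : f x ∈ lspan G := by
  obtain ⟨l, hl, rfl⟩ := hx
  have hsum : f l.sum = (l.map f).sum := map_list_sum (AddMonoidHom.mk' f hf) l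
  exact ⟨l.map f, by simpa using fun g hg => hfG g (hl g hg), hsum⟩

theorem lspan_neg (hneg : ∀ g ∈ G, -g ∈ G) {x : B} (hx : x ∈ lspan G) :
    -x ∈ lspan G := by
  obtain ⟨l, hl, rfl⟩ := hx
  induction l with
  | nil => simpa using lspan_zero
  | cons g t ih =>
    rw [List.sum_cons, neg_add_rev]
    exact lspan_add (ih fun g hg => hl g (List.mem_cons_of_mem _ hg))
      (subset_lspan (hneg g (hl g List.mem_cons_self)))

theorem lspan_bstar_left (hlm : ∀ (d : B), ∀ g ∈ G, lmap d g ∈ G)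
    (hbl : ∀ g ∈ G, ∀ c : B, bstar g c ∈ lspan G) :
    ∀ x ∈ lspan G, ∀ c : B, bstar x c ∈ lspan G := by
  have key : ∀ n (l : List B), l.length = n → (∀ g ∈ l, g ∈ G) →
      ∀ c : B, bstar l.sum c ∈ lspan G := by
    intro n
    induction n with
    | zero =>
      intro l hlen _ c
      rw [List.length_eq_zero_iff] at hlen
      subst hlen
      simpa [bstar_zero_left'] using lspan_zero
    | succ n ih =>
      intro l hlen hmem c
      match l with
      | g :: t =>
        have hg : g ∈ G := hmem g List.mem_cons_self
        have ht : ∀ g' ∈ t, g' ∈ G := fun g' hg' => hmem g' (List.mem_cons_of_mem _ hg')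
        rw [List.sum_cons, bstar_add_left']
        have hmap : lmap g⁻¹ t.sum = (t.map (lmap g⁻¹)).sum :=
          map_list_sum (AddMonoidHom.mk' (lmap g⁻¹) (lmap_add' g⁻¹)) t
        have h1 : bstar (lmap g⁻¹ t.sum) c ∈ lspan G := by
          rw [hmap]
          exact ih (t.map (lmap g⁻¹)) (by simpa using Nat.succ_injective hlen)
            (by simpa using fun g' hg' => hlm g⁻¹ g' (ht g' hg')) c
        exact lspan_add (lspan_map (lmap_add' g) (hlm g) h1) (hbl g hg c)
  intro x hx
  obtain ⟨l, hl, rfl⟩ := hx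
  exact key l.length l rfl hl

theorem lspan_bstar_zero (hlm : ∀ (d : B), ∀ g ∈ G, lmap d g ∈ G)
    (h0 : ∀ g ∈ G, ∀ g' ∈ G, bstar g g' = 0) :
    ∀ x ∈ lspan G, ∀ y ∈ lspan G, bstar x y = 0 := by
  have aux1 : ∀ n (l : List B), l.length = n → (∀ g ∈ l, g ∈ G) →
      ∀ g' ∈ G, bstar l.sum g' = 0 := by
    intro n
    induction n with
    | zero =>
      intro l hlen _ g' _
      rw [List.length_eq_zero_iff] at hlen
      subst hlen
      simp [bstar_zero_left']
    | succ n ih =>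
      intro l hlen hmem g' hg'
      match l with
      | g :: t =>
        have hg : g ∈ G := hmem g List.mem_cons_self
        have ht : ∀ a ∈ t, a ∈ G := fun a ha => hmem a (List.mem_cons_of_mem _ ha)
        rw [List.sum_cons, bstar_add_left']
        have hmap : lmap g⁻¹ t.sum = (t.map (lmap g⁻¹)).sum :=
          map_list_sum (AddMonoidHom.mk' (lmap g⁻¹) (lmap_add' g⁻¹)) t
        have h1 : bstar (lmap g⁻¹ t.sum) g' = 0 := by
          rw [hmap]
          exact ih (t.map (lmap g⁻¹)) (by simpa using Nat.succ_injective hlen)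
            (by simpa using fun a ha => hlm g⁻¹ a (ht a ha)) g' hg'
        rw [h1, lmap_zero', h0 g hg g' hg', add_zero]
  intro x hx y hy
  obtain ⟨l, hl, rfl⟩ := hy
  induction l with
  | nil => simp [bstar_zero_right']
  | cons g t ih =>
    have hg : g ∈ G := hl g List.mem_cons_self
    have ht : ∀ a ∈ t, a ∈ G := fun a ha => hl a (List.mem_cons_of_mem _ ha)
    obtain ⟨lx, hlx, hxeq⟩ := hx
    have hxg : bstar x g = 0 := by
      rw [hxeq]; exact aux1 lx.length lx rfl hlx g hg
    rw [List.sum_cons, bstar_add_right', hxg, ih ht, add_zero, zero_add,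
      sub_self]

end Span

section Action

variable {B₁ B₂ : Type*} [SkewLeftBrace B₁] [SkewLeftBrace B₂]
  (α : BraceActionHom B₂ B₁)

theorem BraceActionHom.act_zero (a : B₂) : α.act a (0 : B₁) = 0 := by
  have h := α.act_add a 0 0
  rw [add_zero] at h
  have h2 : α.act a 0 + α.act a 0 = α.act a 0 + 0 := by rw [add_zero]; exact h.symm
  exact add_left_cancel h2

theorem BraceActionHom.act_neg (a : B₂) (x : B₁) : α.act a (-x) = -(α.act a x) := by
  have h := α.act_add a x (-x)
  rw [add_neg_cancel, α.act_zero] at h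
  exact (neg_eq_of_add_eq_zero_right h.symm).symm

theorem BraceActionHom.act_inv (a : B₂) (x : B₁) : α.act a x⁻¹ = (α.act a x)⁻¹ := by
  have h : α.act a x * α.act a x⁻¹ = 1 := by
    rw [← α.act_mul, mul_inv_cancel, α.act_one']
  exact (inv_eq_of_mul_eq_one_right h).symm

theorem BraceActionHom.act_act_inv (a : B₂) (x : B₁) :
    α.act a (α.act a⁻¹ x) = x := by
  rw [← α.act_hom, mul_inv_cancel, α.act_one]

theorem BraceActionHom.act_inv_act (a : B₂) (x : B₁) :
    α.act a⁻¹ (α.act a x) = x := by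
  rw [← α.act_hom, inv_mul_cancel, α.act_one]

theorem BraceActionHom.act_lmap (a : B₂) (d x : B₁) :
    α.act a (lmap d x) = lmap (α.act a d) (α.act a x) := by
  rw [lmap, lmap, α.act_add, α.act_neg, α.act_mul]

theorem BraceActionHom.act_bstar (a : B₂) (x y : B₁) :
    α.act a (bstar x y) = bstar (α.act a x) (α.act a y) := by
  show α.act a (-x + x * y - y) = -(α.act a x) + α.act a x * α.act a y - α.act a y
  rw [sub_eq_add_neg, sub_eq_add_neg, α.act_add, α.act_add, α.act_neg, α.act_neg,
    α.act_mul]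

theorem IsIdeal.image {M : Set B₁} (h : IsIdeal M) (a : B₂) :
    IsIdeal (α.act a '' M) := by
  constructor
  · exact ⟨0, h.zero_mem, α.act_zero a⟩
  · rintro _ _ ⟨m, hm, rfl⟩ ⟨m', hm', rfl⟩
    exact ⟨m + m', h.add_mem hm hm', α.act_add a m m'⟩
  · rintro _ ⟨m, hm, rfl⟩
    exact ⟨-m, h.neg_mem hm, α.act_neg a m⟩
  · rintro b _ ⟨m, hm, rfl⟩
    refine ⟨α.act a⁻¹ b + m + -(α.act a⁻¹ b), h.add_conj_mem _ hm, ?_⟩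
    rw [α.act_add, α.act_add, α.act_neg, α.act_act_inv]
  · rintro _ _ ⟨m, hm, rfl⟩ ⟨m', hm', rfl⟩
    exact ⟨m * m', h.mul_mem hm hm', α.act_mul a m m'⟩
  · rintro _ ⟨m, hm, rfl⟩
    exact ⟨m⁻¹, h.inv_mem hm, α.act_inv a m⟩
  · rintro b _ ⟨m, hm, rfl⟩
    refine ⟨α.act a⁻¹ b * m * (α.act a⁻¹ b)⁻¹, h.mul_conj_mem _ hm, ?_⟩
    rw [α.act_mul, α.act_mul, α.act_inv, α.act_act_inv]
  · rintro d _ ⟨m, hm, rfl⟩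
    refine ⟨lmap (α.act a⁻¹ d) m, h.lmap_mem _ hm, ?_⟩
    rw [α.act_lmap, α.act_act_inv]

end Action

end SkewLeftBrace

/-- If `B₁` and `B₂` are finite and the semidirect product `B₁ ⋊_α B₂` is semiprime,
then `B₁` is semiprime. -/
theorem semiprime_of_sdp_semiprime_of_finite {B₁ B₂ : Type*}
    [SkewLeftBrace B₁] [SkewLeftBrace B₂] [Finite B₁] [Finite B₂]
    (α : BraceActionHom B₂ B₁)
    (hsp : @SkewLeftBrace.Semiprime _ α.sdp) :
    SkewLeftBrace.Semiprime B₁ := by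
  classical
  intro I hI hIne hstar0
  -- square-zero property of I
  have hsq : ∀ x ∈ I, ∀ y ∈ I, bstar x y = 0 := by
    intro x hx y hy
    have hmem0 : bstar x y ∈ {z : B₁ | ∃ a ∈ I, ∃ b ∈ I, z = bstar a b} :=
      ⟨x, hx, y, hy, rfl⟩
    have hmem : bstar x y ∈ setStar I I := AddSubgroup.subset_closure hmem0
    rw [hstar0] at hmem
    exact hmem
  -- a minimal nonzero ideal M inside I
  have hne : (Set.ncard '' {K : Set B₁ | IsIdeal K ∧ K ⊆ I ∧ K ≠ {0}}).Nonempty :=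
    ⟨_, ⟨I, ⟨hI, subset_rfl, hIne⟩, rfl⟩⟩
  obtain ⟨M, ⟨hM, hMI, hMne⟩, hMcard⟩ := Nat.sInf_mem hne
  have hMmin : ∀ K : Set B₁, IsIdeal K → K ⊆ M → K = {0} ∨ K = M := by
    intro K hK hKM
    by_cases hK0 : K = {0}
    · exact Or.inl hK0
    · right
      have hKmem : K.ncard ∈ Set.ncard '' {K : Set B₁ | IsIdeal K ∧ K ⊆ I ∧ K ≠ {0}} :=
        ⟨K, ⟨hK, hKM.trans hMI, hK0⟩, rfl⟩
      have hle := Nat.sInf_le hKmem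
      rw [← hMcard] at hle
      exact Set.eq_of_subset_of_ncard_le hKM hle (Set.toFinite M)
  have hreim : ∀ (a : B₂) (K : Set B₁), α.act a '' (α.act a⁻¹ '' K) = K := by
    intro a K
    rw [Set.image_image]
    simp [α.act_act_inv]
  have himage_min : ∀ (a : B₂) (K : Set B₁), IsIdeal K → K ⊆ α.act a '' M →
      K = {0} ∨ K = α.act a '' M := by
    intro a K hK hKsub
    have hKim : α.act a⁻¹ '' K ⊆ M := by
      rintro _ ⟨k, hk, rfl⟩
      obtain ⟨m, hm, rfl⟩ := hKsub hk
      rwa [α.act_inv_act]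
    rcases hMmin _ (hK.image α a⁻¹) hKim with h | h
    · left
      rw [← hreim a K, h, Set.image_singleton, α.act_zero]
    · right
      rw [← hreim a K, h]
  have hMne' : ∃ m ∈ M, m ≠ 0 := by
    by_contra hcon
    push_neg at hcon
    exact hMne (Set.eq_singleton_iff_unique_mem.mpr ⟨hM.zero_mem, hcon⟩)
  have himne : ∀ a : B₂, α.act a '' M ≠ {0} := by
    intro a hcon
    obtain ⟨m, hm, hm0⟩ := hMne'
    have hmm : α.act a m ∈ ({0} : Set B₁) := hcon ▸ ⟨m, hm, rfl⟩
    rw [Set.mem_singleton_iff, ← α.act_zero a] at hmm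
    exact hm0 ((α.act_bijective a).1 hmm)
  -- cross vanishing of star products of conjugates of M
  have cross : ∀ (a b : B₂) (x y : B₁), x ∈ α.act a '' M → y ∈ α.act b '' M →
      bstar x y = 0 := by
    intro a b x y hx hy
    have hz : bstar x y ∈ (α.act a '' M) ∩ (α.act b '' M) :=
      ⟨(hM.image α a).bstar_mem_left hx y, (hM.image α b).bstar_mem_right x hy⟩
    rcases himage_min a _ ((hM.image α a).inter (hM.image α b))
      Set.inter_subset_left with h | h
    · rw [h] at hz
      exact hz
    · have hsub : α.act a '' M ⊆ α.act b '' M := by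
        rw [← h]
        exact Set.inter_subset_right
      rcases himage_min b _ (hM.image α a) hsub with h2 | h2
      · exact absurd h2 (himne a)
      · obtain ⟨m, hm, rfl⟩ := hx
        rw [← h2] at hy
        obtain ⟨m', hm', rfl⟩ := hy
        rw [← α.act_bstar, hsq m (hMI hm) m' (hMI hm'), α.act_zero]
  -- the α-invariant ideal J₀ = lspan G
  set G : Set B₁ := ⋃ a : B₂, α.act a '' M with hGdef
  have hGmem : ∀ (a : B₂) (m : B₁), m ∈ M → α.act a m ∈ G := fun a m hm =>
    Set.mem_iUnion.mpr ⟨a, m, hm, rfl⟩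
  have hGelim : ∀ g ∈ G, ∃ a : B₂, g ∈ α.act a '' M := fun g hg => Set.mem_iUnion.mp hg
  have hMG : M ⊆ G := by
    intro m hm
    have h1 := hGmem 1 m hm
    rwa [α.act_one] at h1
  have hGneg : ∀ g ∈ G, -g ∈ G := by
    intro g hg
    obtain ⟨a, m, hm, rfl⟩ := hGelim g hg
    rw [← α.act_neg]
    exact hGmem a _ (hM.neg_mem hm)
  have hGlmap : ∀ (d : B₁), ∀ g ∈ G, lmap d g ∈ G := by
    intro d g hg
    obtain ⟨a, m, hm, rfl⟩ := hGelim g hg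
    have he : α.act a (lmap (α.act a⁻¹ d) m) = lmap d (α.act a m) := by
      rw [α.act_lmap, α.act_act_inv]
    rw [← he]
    exact hGmem a _ (hM.lmap_mem _ hm)
  have hGconj : ∀ (b : B₁), ∀ g ∈ G, b + g + -b ∈ G := by
    intro b g hg
    obtain ⟨a, m, hm, rfl⟩ := hGelim g hg
    have he : α.act a (α.act a⁻¹ b + m + -(α.act a⁻¹ b)) = b + α.act a m + -b := by
      rw [α.act_add, α.act_add, α.act_neg, α.act_act_inv]
    rw [← he]
    exact hGmem a _ (hM.add_conj_mem _ hm)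
  have hGact : ∀ (b : B₂), ∀ g ∈ G, α.act b g ∈ G := by
    intro b g hg
    obtain ⟨a, m, hm, rfl⟩ := hGelim g hg
    rw [← α.act_hom]
    exact hGmem (b * a) m hm
  have hGbstar0 : ∀ g ∈ G, ∀ g' ∈ G, bstar g g' = 0 := by
    intro g hg g' hg'
    obtain ⟨a, hga⟩ := hGelim g hg
    obtain ⟨b, hgb⟩ := hGelim g' hg'
    exact cross a b g g' hga hgb
  have hGbstarL : ∀ g ∈ G, ∀ c : B₁, bstar g c ∈ lspan G := by
    intro g hg c
    obtain ⟨a, hga⟩ := hGelim g hg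
    exact subset_lspan (Set.mem_iUnion.mpr ⟨a, (hM.image α a).bstar_mem_left hga c⟩)
  have hJlmap : ∀ (d : B₁) (x : B₁), x ∈ lspan G → lmap d x ∈ lspan G :=
    fun d x hx => lspan_map (lmap_add' d) (hGlmap d) hx
  have hJneg : ∀ x : B₁, x ∈ lspan G → -x ∈ lspan G := fun x hx => lspan_neg hGneg hx
  have hJconj : ∀ (b : B₁) (x : B₁), x ∈ lspan G → b + x + -b ∈ lspan G := by
    intro b x hx
    refine lspan_map (f := fun u => b + u + -b) ?_ (hGconj b) hx
    intro u v
    simp [add_assoc]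
  have hJbstarL := lspan_bstar_left hGlmap hGbstarL
  have hJsq := lspan_bstar_zero hGlmap hGbstar0
  have hJmul : ∀ x y : B₁, x ∈ lspan G → y ∈ lspan G → x * y ∈ lspan G := by
    intro x y hx hy
    rw [mul_eq_add_lmap]
    exact lspan_add hx (hJlmap x y hy)
  have hJinv : ∀ x : B₁, x ∈ lspan G → x⁻¹ ∈ lspan G := by
    intro x hx
    rw [inv_eq_lmap_neg]
    exact hJlmap _ _ (hJneg x hx)
  have hJmulconj : ∀ (b : B₁) (x : B₁), x ∈ lspan G → b * x * b⁻¹ ∈ lspan G := by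
    intro b x hx
    rw [conj_mul_eq]
    exact hJconj b _ (lspan_add (hJlmap b x hx) (hJlmap b _ (hJbstarL x hx b⁻¹)))
  have hJact : ∀ (b : B₂) (x : B₁), x ∈ lspan G → α.act b x ∈ lspan G :=
    fun b x hx => lspan_map (α.act_add b) (hGact b) hx
  -- move to the semidirect product
  letI : SkewLeftBrace (SDP B₁ B₂) := α.sdp
  have h01 : (0 : B₂) = 1 := zero_eq_one
  set S : Set (SDP B₁ B₂) := {p : SDP B₁ B₂ | p.fst ∈ lspan G ∧ p.snd = 0}
    with hSdef
  have hS : IsIdeal S := by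
    constructor
    · exact ⟨lspan_zero, rfl⟩
    · rintro p q ⟨hp1, hp2⟩ ⟨hq1, hq2⟩
      refine ⟨lspan_add hp1 hq1, ?_⟩
      show p.snd + q.snd = 0
      rw [hp2, hq2, add_zero]
    · rintro p ⟨hp1, hp2⟩
      refine ⟨hJneg _ hp1, ?_⟩
      show -p.snd = 0
      rw [hp2, neg_zero]
    · rintro b p ⟨hp1, hp2⟩
      refine ⟨hJconj b.fst _ hp1, ?_⟩
      show b.snd + p.snd + -b.snd = 0
      rw [hp2, add_zero, add_neg_cancel]
    · rintro p q ⟨hp1, hp2⟩ ⟨hq1, hq2⟩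
      constructor
      · show p.fst * α.act p.snd q.fst ∈ lspan G
        rw [hp2, h01, α.act_one]
        exact hJmul _ _ hp1 hq1
      · show p.snd * q.snd = 0
        rw [hp2, hq2, h01, one_mul]
    · rintro p ⟨hp1, hp2⟩
      constructor
      · show α.act p.snd⁻¹ p.fst⁻¹ ∈ lspan G
        rw [hp2, h01, inv_one, α.act_one]
        exact hJinv _ hp1
      · show p.snd⁻¹ = 0
        rw [hp2, h01, inv_one]
    · rintro b p ⟨hp1, hp2⟩
      constructor
      · show (b.fst * α.act b.snd p.fst) *
          α.act (b.snd * p.snd) (α.act b.snd⁻¹ b.fst⁻¹) ∈ lspan G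
        rw [hp2, h01, mul_one, α.act_act_inv]
        exact hJmulconj b.fst _ (hJact b.snd _ hp1)
      · show b.snd * p.snd * b.snd⁻¹ = 0
        rw [hp2, h01, mul_one, mul_inv_cancel]
    · rintro a p ⟨hp1, hp2⟩
      constructor
      · show -a.fst + a.fst * α.act a.snd p.fst ∈ lspan G
        exact hJlmap a.fst _ (hJact a.snd _ hp1)
      · show -a.snd + a.snd * p.snd = 0
        rw [hp2, SkewLeftBrace.mul_zero', neg_add_cancel]
  have hSne : S ≠ {0} := by
    obtain ⟨m, hm, hm0⟩ := hMne'
    intro hcon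
    have hmem : (⟨m, 0⟩ : SDP B₁ B₂) ∈ S := ⟨subset_lspan (hMG hm), rfl⟩
    rw [hcon] at hmem
    exact hm0 (congrArg SDP.fst (Set.mem_singleton_iff.mp hmem))
  have hgen : {z : SDP B₁ B₂ | ∃ x ∈ S, ∃ y ∈ S, z = bstar x y} ⊆
      (↑(⊥ : AddSubgroup (SDP B₁ B₂)) : Set (SDP B₁ B₂)) := by
    rintro z ⟨x, ⟨hx1, hx2⟩, y, ⟨hy1, hy2⟩, rfl⟩
    rw [AddSubgroup.coe_bot, Set.mem_singleton_iff]
    refine SDP.ext ?_ ?_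
    · show -x.fst + x.fst * α.act x.snd y.fst + -y.fst = (0 : B₁)
      rw [hx2, h01, α.act_one, ← sub_eq_add_neg]
      exact hJsq x.fst hx1 y.fst hy1
    · show -x.snd + x.snd * y.snd + -y.snd = (0 : B₂)
      rw [hx2, hy2, SkewLeftBrace.mul_zero']
      simp
  have hstarS : setStar S S = ({0} : Set (SDP B₁ B₂)) := by
    have hle : AddSubgroup.closure
        {z : SDP B₁ B₂ | ∃ x ∈ S, ∃ y ∈ S, z = bstar x y} ≤ ⊥ :=
      (AddSubgroup.closure_le ⊥).mpr hgen
    calc setStar S S = (↑(⊥ : AddSubgroup (SDP B₁ B₂)) : Set (SDP B₁ B₂)) := by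
          rw [setStar, le_bot_iff.mp hle]
      _ = {0} := AddSubgroup.coe_bot
  exact hsp S hS hSne hstarS
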